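/- A persistent sheaf of finite type on a finite poset X is equivalent to a sheaf of finitely generated N_0-graded k[t]-modules on X: the category of functors N_0 → Shv(X, vec) of finite type is equivalent to Shv(X, grMod_{k[t]}). -/

import Mathlib

open CategoryTheory

/-! Persistent sheaves on a finite poset and sheaves of graded `k[t]`-modules.
A sheaf on a finite poset `X` valued in a category `C` is a functor `X ⥤ C`. -/

/-- An `ℕ`-graded `k[t]`-module, given by its graded pieces and the action of `t`. -/
structure GrMod (k : Type) [Field k] where
  piece : ℕ → Type
  [grp : ∀ n, AddCommGroup (piece n)]
  [mod : ∀ n, Module k (piece n)]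
  act : ∀ n, piece n →ₗ[k] piece (n + 1)

attribute [instance] GrMod.grp GrMod.mod

variable {k : Type} [Field k]

/-- Iterated action of `t`, raising the degree by `j`. -/
noncomputable def GrMod.actIterAux (M : GrMod k) (a : ℕ) :
    (j : ℕ) → (M.piece a →ₗ[k] M.piece (a + j))
  | 0 => LinearMap.id
  | j + 1 => (M.act (a + j)) ∘ₗ (M.actIterAux a j)

/-- Iterated action of `t` from degree `a` to degree `b ≥ a`. -/
noncomputable def GrMod.actIter (M : GrMod k) (a b : ℕ) (h : a ≤ b) :
    M.piece a →ₗ[k] M.piece b :=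
  (Nat.add_sub_cancel' h) ▸ (M.actIterAux a (b - a))

/-- Finite generation of a graded `k[t]`-module. -/
def GrMod.FG (M : GrMod k) : Prop :=
  ∃ s : Finset (Σ n : ℕ, M.piece n), ∀ (m : ℕ) (x : M.piece m),
    x ∈ Submodule.span k
      {y : M.piece m | ∃ g ∈ s, ∃ h : g.1 ≤ m, M.actIter g.1 m h g.2 = y}

instance : Category (GrMod k) where
  Hom M N := {φ : ∀ n, M.piece n →ₗ[k] N.piece n //
    ∀ n, (N.act n) ∘ₗ (φ n) = (φ (n + 1)) ∘ₗ (M.act n)}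
  id M := ⟨fun _ => LinearMap.id, by intro n; simp⟩
  comp φ ψ := ⟨fun n => (ψ.1 n) ∘ₗ (φ.1 n), by
    intro n
    rw [← LinearMap.comp_assoc, ψ.2 n, LinearMap.comp_assoc, φ.2 n, LinearMap.comp_assoc]⟩
  id_comp φ := by apply Subtype.ext; funext n; rfl
  comp_id φ := by apply Subtype.ext; funext n; rfl
  assoc φ ψ χ := by apply Subtype.ext; funext n; rfl

/-- A persistent sheaf (functor `ℕ ⥤ Shv(X, vec)`) is of finite type if its structure
maps are eventually isomorphisms. -/
def FiniteTypeShv (X : Type) [PartialOrder X] (F : ℕ ⥤ (X ⥤ FGModuleCat k)) : Prop :=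
  ∃ m : ℕ, ∀ i j : ℕ, ∀ h : i ≤ j, m ≤ i → IsIso (F.map h.hom)

section Lemmas

variable {k : Type} [Field k]

namespace GrMod

lemma actIter_eq_aux (M : GrMod k) (a j : ℕ) (h : a ≤ a + j) :
    M.actIter a (a + j) h = M.actIterAux a j := by
  unfold GrMod.actIter
  have key : ∀ (m : ℕ) (e : a + m = a + j),
      (e ▸ M.actIterAux a m : M.piece a →ₗ[k] M.piece (a + j)) = M.actIterAux a j := by
    intro m e
    obtain rfl : m = j := by omega
    rfl
  exact key _ _

lemma actIter_self (M : GrMod k) (a : ℕ) (h : a ≤ a) :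
    M.actIter a a h = LinearMap.id :=
  M.actIter_eq_aux a 0 h

lemma actIter_succ (M : GrMod k) (a b : ℕ) (h : a ≤ b) (h' : a ≤ b + 1) :
    M.actIter a (b + 1) h' = (M.act b) ∘ₗ (M.actIter a b h) := by
  obtain ⟨j, rfl⟩ := Nat.exists_eq_add_of_le h
  have h1 := M.actIter_eq_aux a (j + 1) h'
  have h2 := M.actIter_eq_aux a j h
  exact h1.trans (by rw [h2]; rfl)

lemma actIter_trans (M : GrMod k) (a b c : ℕ) (hab : a ≤ b) (hbc : b ≤ c) :
    M.actIter a c (hab.trans hbc) = (M.actIter b c hbc) ∘ₗ (M.actIter a b hab) := by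
  induction c, hbc using Nat.le_induction with
  | base => rw [M.actIter_self]; ext x; rfl
  | succ c hbc ih =>
      rw [M.actIter_succ a c (hab.trans hbc), M.actIter_succ b c hbc, ih,
        LinearMap.comp_assoc]

end GrMod

end Lemmas

namespace PersistAux

open CategoryTheory

variable {k : Type} [Field k]

lemma hom_actIter {M N : GrMod k} (φ : M ⟶ N) (a b : ℕ) (h : a ≤ b) :
    (N.actIter a b h) ∘ₗ (φ.1 a) = (φ.1 b) ∘ₗ (M.actIter a b h) := by
  induction b, h using Nat.le_induction with
  | base => rw [N.actIter_self, M.actIter_self]; ext x; rfl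
  | succ b hb ih =>
      rw [N.actIter_succ a b hb, M.actIter_succ a b hb, LinearMap.comp_assoc, ih,
        ← LinearMap.comp_assoc, φ.2 b, LinearMap.comp_assoc]

/-- From a persistence module (functor) to a graded module. -/
def toGr : (ℕ ⥤ FGModuleCat k) ⥤ GrMod k where
  obj G :=
    { piece := fun n => G.obj n
      act := fun n => (G.map (homOfLE (Nat.le_succ n))).hom.hom }
  map {G H} η := ⟨fun n => (η.app n).hom.hom, fun n =>
    congrArg (fun f => f.hom.hom) (η.naturality (homOfLE (Nat.le_succ n))).symm⟩
  map_id _ := by apply Subtype.ext; funext n; rfl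
  map_comp _ _ := by apply Subtype.ext; funext n; rfl

lemma toGr_actIter (G : ℕ ⥤ FGModuleCat k) (a b : ℕ) (h : a ≤ b) :
    (toGr.obj G).actIter a b h = (G.map (homOfLE h)).hom.hom := by
  induction b, h using Nat.le_induction with
  | base =>
      rw [GrMod.actIter_self]
      have : homOfLE (le_refl a) = 𝟙 a := rfl
      rw [this, G.map_id]; rfl
  | succ b hb ih =>
      rw [GrMod.actIter_succ (toGr.obj G) a b hb, ih]
      exact congrArg (fun f => f.hom.hom) (G.map_comp (homOfLE hb) (homOfLE (Nat.le_succ b))).symm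

end PersistAux

namespace PersistAux

lemma FG.finite {M : GrMod k} (hM : M.FG) (n : ℕ) : Module.Finite k (M.piece n) := by
  classical
  obtain ⟨s, hs⟩ := hM
  set f : (Σ m : ℕ, M.piece m) → M.piece n := fun g =>
    if h : g.1 ≤ n then M.actIter g.1 n h g.2 else 0 with hf
  have hsub : {y : M.piece n | ∃ g ∈ s, ∃ h : g.1 ≤ n, M.actIter g.1 n h g.2 = y} ⊆ f '' ↑s := by
    rintro y ⟨g, hg, h, rfl⟩
    exact ⟨g, hg, by simp [hf, h]⟩
  rw [Module.finite_def]
  have htop : (⊤ : Submodule k (M.piece n)) = Submodule.span k (f '' ↑s) := by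
    apply le_antisymm
    · intro x _
      exact Submodule.span_mono hsub (hs n x)
    · exact le_top
  rw [htop]
  exact Submodule.fg_span ((s.finite_toSet).image f)

lemma FG.surj {M : GrMod k} (hM : M.FG) :
    ∃ m : ℕ, ∀ n, m ≤ n → Function.Surjective (M.act n) := by
  obtain ⟨s, hs⟩ := hM
  refine ⟨s.sup (fun g => g.1), fun n hn x => ?_⟩
  have hx := hs (n + 1) x
  have hker : Submodule.span k
      {y : M.piece (n+1) | ∃ g ∈ s, ∃ h : g.1 ≤ n + 1, M.actIter g.1 (n+1) h g.2 = y} ≤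
      LinearMap.range (M.act n) := by
    rw [Submodule.span_le]
    rintro y ⟨g, hg, h, rfl⟩
    have hg1 : g.1 ≤ n := le_trans (Finset.le_sup hg) hn
    rw [M.actIter_succ g.1 n hg1]
    exact ⟨_, rfl⟩
  exact hker hx

lemma FG.bij {M : GrMod k} (hM : M.FG) :
    ∃ m : ℕ, ∀ a b (h : a ≤ b), m ≤ a → Function.Bijective (M.actIter a b h) := by
  haveI : ∀ n, Module.Finite k (M.piece n) := fun n => FG.finite hM n
  obtain ⟨m, hm⟩ := FG.surj hM
  set d : ℕ → ℕ := fun n => Module.finrank k (M.piece n) with hd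
  have hmono : ∀ a b, m ≤ a → a ≤ b → d b ≤ d a := by
    intro a b hma hab
    induction b, hab using Nat.le_induction with
    | base => exact le_rfl
    | succ b hab ih =>
        refine le_trans ?_ ih
        have hsur := hm b (hma.trans hab)
        have hrange : LinearMap.range (M.act b) = ⊤ := LinearMap.range_eq_top.mpr hsur
        calc d (b+1) = Module.finrank k (⊤ : Submodule k (M.piece (b+1))) :=
              (finrank_top k _).symm
          _ = Module.finrank k (LinearMap.range (M.act b)) := by rw [hrange]
          _ ≤ d b := LinearMap.finrank_range_le _
  -- find stabilization point
  have hne : (Set.range fun i : ℕ => d (m + i)).Nonempty := ⟨d m, ⟨0, rfl⟩⟩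
  obtain ⟨i0, hi0⟩ := Nat.sInf_mem hne
  set m' := m + i0 with hm'
  have hconst : ∀ n, m' ≤ n → d n = d m' := by
    intro n hn
    have h1 : d n ≤ d m' := hmono m' n (Nat.le_add_right m i0) hn
    have hi0' : d m' = sInf (Set.range fun i : ℕ => d (m + i)) := hi0
    have h2 : d m' ≤ d n := by
      rw [hi0']
      obtain ⟨j, rfl⟩ := Nat.exists_eq_add_of_le ((Nat.le_add_right m i0).trans hn)
      exact Nat.sInf_le ⟨j, rfl⟩
    exact le_antisymm h1 h2
  have hactbij : ∀ n, m' ≤ n → Function.Bijective (M.act n) := by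
    intro n hn
    have hsur := hm n ((Nat.le_add_right m i0).trans hn)
    have hdim : Module.finrank k (M.piece n) = Module.finrank k (M.piece (n+1)) := by
      rw [show Module.finrank k (M.piece n) = d n from rfl,
        show Module.finrank k (M.piece (n+1)) = d (n+1) from rfl,
        hconst n hn, hconst (n+1) (hn.trans (Nat.le_succ n))]
    exact ⟨(LinearMap.injective_iff_surjective_of_finrank_eq_finrank hdim).mpr hsur, hsur⟩
  refine ⟨m', fun a b h ha => ?_⟩
  induction b, h using Nat.le_induction with
  | base => rw [M.actIter_self]; exact Function.bijective_id
  | succ b hb ih =>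
      rw [M.actIter_succ a b hb]
      exact (hactbij b (ha.trans hb)).comp ih

end PersistAux

namespace PersistAux

lemma actIter_one (M : GrMod k) (n : ℕ) (h : n ≤ n + 1) :
    M.actIter n (n + 1) h = M.act n := by
  rw [M.actIter_succ n n le_rfl, M.actIter_self]
  ext x; rfl

/-- Finite type condition for a single persistence module. -/
def FTone (G : ℕ ⥤ FGModuleCat k) : Prop :=
  ∃ m : ℕ, ∀ i j : ℕ, ∀ h : i ≤ j, m ≤ i → IsIso (G.map h.hom)

lemma isIso_of_bijective {V W : FGModuleCat k} (f : V ⟶ W) (hf : Function.Bijective f.hom.hom) :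
    IsIso f :=
  ⟨ObjectProperty.homMk (ModuleCat.ofHom (LinearEquiv.ofBijective f.hom.hom hf).symm.toLinearMap),
    FGModuleCat.hom_ext (LinearMap.ext fun x => (LinearEquiv.ofBijective f.hom.hom hf).symm_apply_apply x),
    FGModuleCat.hom_ext (LinearMap.ext fun x => (LinearEquiv.ofBijective f.hom.hom hf).apply_symm_apply x)⟩

lemma bijective_of_isIso {V W : FGModuleCat k} (f : V ⟶ W) [IsIso f] :
    Function.Bijective f.hom.hom := by
  constructor
  · intro x y hxy
    have h1 := congrArg (fun g => g.hom.hom x) (IsIso.hom_inv_id f)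
    have h2 := congrArg (fun g => g.hom.hom y) (IsIso.hom_inv_id f)
    calc x = (CategoryTheory.inv f).hom.hom (f.hom.hom x) := h1.symm
    _ = (CategoryTheory.inv f).hom.hom (f.hom.hom y) := by rw [hxy]
    _ = y := h2
  · intro y
    exact ⟨(CategoryTheory.inv f).hom.hom y, congrArg (fun g => g.hom.hom y) (IsIso.inv_hom_id f)⟩

/-- From a graded module with finite-dimensional pieces to a persistence module. -/
noncomputable def PsiObj (M : GrMod k) (hM : ∀ n, Module.Finite k (M.piece n)) :
    ℕ ⥤ FGModuleCat k where
  obj n := ⟨ModuleCat.of k (M.piece n), hM n⟩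
  map {a b} f := ObjectProperty.homMk (ModuleCat.ofHom (M.actIter a b (leOfHom f)))
  map_id a := FGModuleCat.hom_ext (M.actIter_self a le_rfl)
  map_comp {a b c} f g := FGModuleCat.hom_ext (M.actIter_trans a b c (leOfHom f) (leOfHom g))

noncomputable def Psi : ObjectProperty.FullSubcategory (fun M : GrMod k => M.FG) ⥤ (ℕ ⥤ FGModuleCat k) where
  obj M := PsiObj M.obj (fun n => FG.finite M.property n)
  map {M N} φ :=
    { app := fun n => ObjectProperty.homMk (ModuleCat.ofHom (φ.hom.1 n))
      naturality := fun a b f => FGModuleCat.hom_ext (hom_actIter φ.hom a b (leOfHom f)).symm }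
  map_id _ := rfl
  map_comp _ _ := rfl

lemma ftone_psi {M : GrMod k} (hM : M.FG) :
    FTone (PsiObj M (fun n => FG.finite hM n)) := by
  obtain ⟨m, hm⟩ := FG.bij hM
  exact ⟨m, fun i j h hi => isIso_of_bijective _ (hm i j h hi)⟩

lemma fg_toGr {G : ℕ ⥤ FGModuleCat k} (hG : FTone G) : (toGr.obj G).FG := by
  classical
  obtain ⟨m, hm⟩ := hG
  have hfin : ∀ n : ℕ, ∃ S : Finset ((toGr.obj G).piece n),
      Submodule.span k (S : Set ((toGr.obj G).piece n)) = ⊤ := by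
    intro n
    obtain ⟨S, hS⟩ := (Module.finite_def (R := k) (M := G.obj n)).mp inferInstance
    exact ⟨S, hS⟩
  choose S hS using hfin
  refine ⟨(Finset.range (m + 1)).biUnion
    (fun n => (S n).image (fun y => (⟨n, y⟩ : Σ n, (toGr.obj G).piece n))), ?_⟩
  intro n x
  rcases le_total n m with hnm | hmn
  · -- small degrees: generators at degree n itself
    have hsub : (↑(S n) : Set ((toGr.obj G).piece n)) ⊆
        {y : (toGr.obj G).piece n | ∃ g ∈ (Finset.range (m + 1)).biUnion
          (fun p => (S p).image (fun y => (⟨p, y⟩ : Σ p, (toGr.obj G).piece p))),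
          ∃ h : g.1 ≤ n, (toGr.obj G).actIter g.1 n h g.2 = y} := by
      intro y hy
      refine ⟨⟨n, y⟩, ?_, le_rfl, ?_⟩
      · exact Finset.mem_biUnion.mpr ⟨n, Finset.mem_range.mpr (Nat.lt_succ_of_le hnm),
          Finset.mem_image_of_mem _ hy⟩
      · rw [(toGr.obj G).actIter_self]; rfl
    have hx : x ∈ Submodule.span k (↑(S n) : Set ((toGr.obj G).piece n)) := by rw [hS n]; trivial
    exact Submodule.span_mono hsub hx
  · -- large degrees: use surjectivity of actIter from degree m
    have hbij : Function.Bijective ((toGr.obj G).actIter m n hmn) := by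
      have : (toGr.obj G).actIter m n hmn = (G.map (homOfLE hmn)).hom.hom := toGr_actIter G m n hmn
      rw [this]
      haveI : IsIso (G.map (homOfLE hmn)) := hm m n hmn le_rfl
      exact bijective_of_isIso _
    obtain ⟨z, hz⟩ := hbij.2 x
    have hzmem : z ∈ Submodule.span k (↑(S m) : Set ((toGr.obj G).piece m)) := by rw [hS m]; trivial
    have hxmem : x ∈ Submodule.span k (((toGr.obj G).actIter m n hmn) '' ↑(S m)) := by
      rw [← Submodule.map_span]
      exact ⟨z, hzmem, hz⟩
    refine Submodule.span_mono ?_ hxmem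
    rintro y ⟨w, hw, rfl⟩
    refine ⟨⟨m, w⟩, ?_, hmn, rfl⟩
    exact Finset.mem_biUnion.mpr ⟨m, Finset.mem_range.mpr (Nat.lt_succ_self m),
      Finset.mem_image_of_mem _ hw⟩

end PersistAux

namespace PersistAux

/-- The main one-variable equivalence: finitely generated graded modules are
equivalent to finite type persistence modules. -/
noncomputable def e0 : ObjectProperty.FullSubcategory (fun M : GrMod k => M.FG) ≌
    ObjectProperty.FullSubcategory (fun G : ℕ ⥤ FGModuleCat k => FTone G) :=
  CategoryTheory.Equivalence.mk
    (ObjectProperty.lift _ Psi (fun M => ftone_psi M.property))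
    (ObjectProperty.lift _ (ObjectProperty.ι _ ⋙ toGr) (fun G => fg_toGr G.property))
    (NatIso.ofComponents
      (fun M =>
        { hom := ObjectProperty.homMk ⟨fun n => LinearMap.id, fun n => by
            show M.obj.actIter n (n + 1) (Nat.le_succ n) ∘ₗ LinearMap.id
              = LinearMap.id ∘ₗ M.obj.act n
            rw [actIter_one]
            ext x; rfl⟩
          inv := ObjectProperty.homMk ⟨fun n => LinearMap.id, fun n => by
            show M.obj.act n ∘ₗ LinearMap.id
              = LinearMap.id ∘ₗ M.obj.actIter n (n + 1) (Nat.le_succ n)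
            rw [actIter_one]
            ext x; rfl⟩
          hom_inv_id := by apply ObjectProperty.hom_ext; apply Subtype.ext; funext n; rfl
          inv_hom_id := by apply ObjectProperty.hom_ext; apply Subtype.ext; funext n; rfl })
      (fun {M N} φ => by apply ObjectProperty.hom_ext; apply Subtype.ext; funext n; rfl))
    (NatIso.ofComponents
      (fun G =>
        { hom := ObjectProperty.homMk
            { app := fun n => ObjectProperty.homMk (ModuleCat.ofHom LinearMap.id)
              naturality := fun a b f => by
                refine FGModuleCat.hom_ext (LinearMap.ext fun x => ?_)
                exact DFunLike.congr_fun (toGr_actIter G.obj a b (leOfHom f)) x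
              }
          inv := ObjectProperty.homMk
            { app := fun n => ObjectProperty.homMk (ModuleCat.ofHom LinearMap.id)
              naturality := fun a b f => by
                refine FGModuleCat.hom_ext (LinearMap.ext fun x => ?_)
                exact (DFunLike.congr_fun (toGr_actIter G.obj a b (leOfHom f)) x).symm
              }
          hom_inv_id := by apply ObjectProperty.hom_ext; apply NatTrans.ext; funext n; rfl
          inv_hom_id := by apply ObjectProperty.hom_ext; apply NatTrans.ext; funext n; rfl })
      (fun {G H} η => by apply ObjectProperty.hom_ext; apply NatTrans.ext; funext n; rfl))

end PersistAux

namespace PersistAux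

universe v₁ v₂ v₃ u₁ u₂ u₃

variable (A : Type u₁) (B : Type u₂) (C : Type u₃)
  [Category.{v₁} A] [Category.{v₂} B] [Category.{v₃} C]

/-- Flipping bifunctors, as a functor. -/
@[simps]
def flipFn : (A ⥤ B ⥤ C) ⥤ (B ⥤ A ⥤ C) where
  obj F := F.flip
  map {F G} η :=
    { app := fun b =>
        { app := fun a => (η.app a).app b
          naturality := fun a a' f => NatTrans.congr_app (η.naturality f) b }
      naturality := fun b b' g => by
        ext a
        exact (η.app a).naturality g }
  map_id F := by ext b a; rfl
  map_comp f g := by ext b a; rfl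

/-- The flip equivalence between bifunctor categories. -/
def flipEquiv : (A ⥤ B ⥤ C) ≌ (B ⥤ A ⥤ C) :=
  CategoryTheory.Equivalence.mk (flipFn A B C) (flipFn B A C)
    (NatIso.ofComponents (fun F => Iso.refl F) (by intros; ext; simp [flipFn]))
    (NatIso.ofComponents (fun F => Iso.refl F) (by intros; ext; simp [flipFn]))

variable {A B C}

/-- An isomorphism in a full subcategory from an isomorphism of underlying objects. -/
def subIso {P : A → Prop} {c c' : ObjectProperty.FullSubcategory P} (i : c.obj ≅ c'.obj) : c ≅ c' where
  hom := ObjectProperty.homMk i.hom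
  inv := ObjectProperty.homMk i.inv
  hom_inv_id := ObjectProperty.hom_ext _ i.hom_inv_id
  inv_hom_id := ObjectProperty.hom_ext _ i.inv_hom_id

/-- Restricting an equivalence to full subcategories. -/
def fullSubEquiv (e : A ≌ B) (P : A → Prop) (Q : B → Prop)
    (h1 : ∀ c, P c → Q (e.functor.obj c)) (h2 : ∀ d, Q d → P (e.inverse.obj d)) :
    ObjectProperty.FullSubcategory P ≌ ObjectProperty.FullSubcategory Q :=
  CategoryTheory.Equivalence.mk
    (ObjectProperty.lift Q (ObjectProperty.ι P ⋙ e.functor)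
      (fun c => h1 c.obj c.property))
    (ObjectProperty.lift P (ObjectProperty.ι Q ⋙ e.inverse)
      (fun d => h2 d.obj d.property))
    (NatIso.ofComponents (fun c => subIso (e.unitIso.app c.obj))
      (fun f => ObjectProperty.hom_ext _ (e.unitIso.hom.naturality f.hom)))
    (NatIso.ofComponents (fun d => subIso (e.counitIso.app d.obj))
      (fun f => ObjectProperty.hom_ext _ (e.counitIso.hom.naturality f.hom)))

/-- Functors into a full subcategory vs functors with pointwise property. -/
def subFunctorEquiv (Q : C → Prop) :
    ObjectProperty.FullSubcategory (fun F : A ⥤ C => ∀ a, Q (F.obj a)) ≌ (A ⥤ ObjectProperty.FullSubcategory Q) :=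
  CategoryTheory.Equivalence.mk
    { obj := fun F => ObjectProperty.lift Q F.obj F.property
      map := fun {F G} η =>
        { app := fun a => ObjectProperty.homMk (η.hom.app a)
          naturality := fun a b f => ObjectProperty.hom_ext _ (η.hom.naturality f) }
      map_id := fun F => rfl
      map_comp := fun f g => rfl }
    { obj := fun G => ⟨G ⋙ ObjectProperty.ι Q, fun a => (G.obj a).property⟩
      map := fun {F G} η => ObjectProperty.homMk (Functor.whiskerRight η (ObjectProperty.ι Q))
      map_id := fun F => rfl
      map_comp := fun f g => rfl }
    (NatIso.ofComponents (fun F => Iso.refl _)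
      (by intros; exact (Category.comp_id _).trans (Category.id_comp _).symm))
    (NatIso.ofComponents (fun G => Iso.refl _)
      (by intros; exact (Category.comp_id _).trans (Category.id_comp _).symm))

end PersistAux

namespace PersistAux

variable {X : Type} [PartialOrder X]

lemma ftone_of_finiteType (F : ℕ ⥤ (X ⥤ FGModuleCat k)) (hF : FiniteTypeShv X F) :
    ∀ x : X, FTone (F.flip.obj x) := by
  obtain ⟨m, hm⟩ := hF
  intro x
  refine ⟨m, fun i j h hi => ?_⟩
  haveI := hm i j h hi
  exact inferInstanceAs (IsIso ((F.map h.hom).app x))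

lemma finiteType_of_ftone [Fintype X] (F : X ⥤ (ℕ ⥤ FGModuleCat k))
    (hF : ∀ x : X, FTone (F.obj x)) : FiniteTypeShv X F.flip := by
  classical
  choose m hm using hF
  refine ⟨Finset.univ.sup m, fun i j h hi => ?_⟩
  haveI : ∀ x : X, IsIso ((F.flip.map h.hom).app x) := fun x =>
    hm x i j h (le_trans (Finset.le_sup (Finset.mem_univ x)) hi)
  exact NatIso.isIso_of_isIso_app _

end PersistAux


namespace PersistAux

universe w

/-- Changing the universe of the finite-dimensional vector spaces. -/
noncomputable def ftEquiv (X : Type) [PartialOrder X] :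
    ObjectProperty.FullSubcategory (fun F : ℕ ⥤ (X ⥤ FGModuleCat.{w} k) => FiniteTypeShv X F) ≌
      ObjectProperty.FullSubcategory (fun F : ℕ ⥤ (X ⥤ FGModuleCat.{0} k) => FiniteTypeShv X F) :=
  fullSubEquiv
    (((FGModuleCat.ulift.{0, w} k).asEquivalence.symm.congrRight (E := X)).congrRight (E := ℕ))
    _ _
    (fun F ⟨m, hm⟩ => ⟨m, fun i j h hi => by
      haveI := hm i j h hi
      exact Functor.map_isIso
        ((FGModuleCat.ulift.{0, w} k).asEquivalence.symm.congrRight (E := X)).functor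
        (F.map h.hom)⟩)
    (fun F ⟨m, hm⟩ => ⟨m, fun i j h hi => by
      haveI := hm i j h hi
      exact Functor.map_isIso
        ((FGModuleCat.ulift.{0, w} k).asEquivalence.symm.congrRight (E := X)).inverse
        (F.map h.hom)⟩)

end PersistAux


/-- On a finite poset `X`, the category of persistent sheaves of
finite type (functors `ℕ ⥤ Shv(X, vec)` of finite type) is equivalent to the category
of sheaves on `X` valued in finitely generated `ℕ`-graded `k[t]`-modules. -/
theorem persistent_sheaf_equiv_graded_sheaf (k : Type) [Field k]
    (X : Type) [PartialOrder X] [Fintype X] :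
    Nonempty ((ObjectProperty.FullSubcategory (fun F : ℕ ⥤ (X ⥤ FGModuleCat k) => FiniteTypeShv X F)) ≌
      (X ⥤ ObjectProperty.FullSubcategory (fun M : GrMod k => M.FG))) := by
  refine ⟨(PersistAux.ftEquiv (k := k) X).trans ((PersistAux.fullSubEquiv (PersistAux.flipEquiv ℕ X (FGModuleCat.{0} k))
      (fun F => FiniteTypeShv X F) (fun F' => ∀ x, PersistAux.FTone.{0} (F'.obj x))
      PersistAux.ftone_of_finiteType PersistAux.finiteType_of_ftone).trans
    ((PersistAux.subFunctorEquiv (A := X) (PersistAux.FTone.{0} (k := k))).trans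
      (Equivalence.congrRight PersistAux.e0.symm)))⟩
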